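/- For every even integer n ≥ 2 and every h ≥ 0, the variance of the number of integers coprime to n in an interval of length h is bounded by its mean: H(n, h) ≤ h · φ(n)/n. -/

import Mathlib

/-- `F n m h` is the number of integers `r` with `m ≤ r ≤ m + h - 1` coprime to `n`. -/
noncomputable def F (n : ℕ) (m : ℤ) (h : ℕ) : ℕ :=
  ((Finset.Ico m (m + (h : ℤ))).filter (fun r => Int.gcd r n = 1)).card

/-- The variance over a full period of the number of integers coprime to `n` in an
interval of length `h`: `H(n,h) = (1/n) ∑_{m=1}^n (F_n(m,h) - hφ(n)/n)²`. -/
noncomputable def Hvar (n : ℕ) (h : ℕ) : ℝ :=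
  (1 / (n : ℝ)) *
    ∑ m ∈ Finset.Icc (1 : ℤ) (n : ℤ),
      ((F n m h : ℝ) - (h : ℝ) * (Nat.totient n) / n) ^ 2

open Finset

namespace VL

variable {t : ℤ}

/-- gcd=1 only depends on the residue. -/
lemma gcd_one_congr {a b : ℤ} (n : ℤ) (h : a % n = b % n) :
    Int.gcd a n = 1 ↔ Int.gcd b n = 1 := by
  obtain ⟨k, hk⟩ : n ∣ (b - a) := Int.ModEq.dvd h
  have hb : b = a + n * k := by linarith
  subst hb
  rw [← Int.isCoprime_iff_gcd_eq_one, ← Int.isCoprime_iff_gcd_eq_one]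
  exact ⟨fun h2 => h2.add_mul_left_left k, fun h2 => h2.of_add_mul_left_left⟩

lemma count_mod (d M r : ℕ) (hd : 0 < d) :
    #{x ∈ range (d * M) | x % d = r} = if r < d then M else 0 := by
  split_ifs with hr
  · rw [Finset.card_eq_of_bijective (fun q _ => d * q + r)]
    · intro x hx
      simp only [mem_filter, mem_range] at hx
      refine ⟨x / d, ?_, ?_⟩
      · exact (Nat.div_lt_iff_lt_mul hd).2 (by rw [mul_comm]; exact hx.1)
      · rw [← hx.2]; exact (Nat.div_add_mod x d)
    · intro q hq
      simp only [mem_filter, mem_range]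
      constructor
      · calc d * q + r < d * q + d := by omega
          _ = d * (q + 1) := by ring
          _ ≤ d * M := Nat.mul_le_mul_left d hq
      · rw [Nat.mul_add_mod]; exact Nat.mod_eq_of_lt hr
    · intro i j _ _ hij
      have : d * i = d * j := by omega
      exact Nat.eq_of_mul_eq_mul_left hd this
  · rw [Finset.card_eq_zero, Finset.filter_eq_empty_iff]
    intro x _
    exact fun hx => hr (hx ▸ Nat.mod_lt x hd)

end VL

namespace VL2
open VL Finset

/-- The number of `x < m` with both `x` and `x+t` coprime to `m`. -/
def G (t : ℤ) (m : ℕ) : ℕ :=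
  (Finset.range m).filter (fun x : ℕ => Int.gcd (x : ℤ) m = 1 ∧ Int.gcd ((x : ℤ) + t) m = 1)
    |>.card

lemma cast_mod_eq {M x y : ℕ} (hxy : x % M = y % M) : (x : ℤ) % M = (y : ℤ) % M := by
  have := congrArg (Nat.cast : ℕ → ℤ) hxy
  push_cast at this
  exact this

lemma cond_congr (t : ℤ) {M x y : ℕ} (hxy : x % M = y % M) :
    ((Int.gcd (x : ℤ) M = 1 ∧ Int.gcd ((x : ℤ) + t) M = 1) ↔
      (Int.gcd (y : ℤ) M = 1 ∧ Int.gcd ((y : ℤ) + t) M = 1)) := by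
  have h1 := cast_mod_eq (M := M) hxy
  have h2 : ((x:ℤ) + t) % M = ((y:ℤ) + t) % M := Int.ModEq.add_right t h1
  rw [gcd_one_congr (M:ℤ) h1, gcd_one_congr (M:ℤ) h2]

lemma gcd_pp_left {p : ℕ} (hp : p.Prime) (k : ℕ) (hk : 0 < k) (x : ℕ) :
    Int.gcd (x : ℤ) (p ^ k : ℕ) = 1 ↔ ¬ p ∣ x := by
  rw [Int.gcd_natCast_natCast]
  rw [show (Nat.gcd x (p^k) = 1) ↔ Nat.Coprime x (p^k) from Iff.rfl,
    Nat.coprime_pow_right_iff hk, Nat.coprime_comm]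
  exact hp.coprime_iff_not_dvd

lemma gcd_pp_right {p : ℕ} (hp : p.Prime) (k : ℕ) (hk : 0 < k) (z : ℤ) :
    Int.gcd z (p ^ k : ℕ) = 1 ↔ ¬ (p : ℤ) ∣ z := by
  have h : Int.gcd z (p ^ k : ℕ) = Nat.gcd z.natAbs (p ^ k) := rfl
  rw [h]
  rw [show (Nat.gcd z.natAbs (p^k) = 1) ↔ Nat.Coprime z.natAbs (p^k) from Iff.rfl,
    Nat.coprime_pow_right_iff hk, Nat.coprime_comm]
  rw [hp.coprime_iff_not_dvd, Int.natCast_dvd]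

lemma G_pp (t : ℤ) {p : ℕ} (hp : p.Prime) (k : ℕ) (hk : 0 < k) :
    G t (p ^ k) = if (p:ℤ) ∣ t then p ^ k - p ^ (k-1) else p ^ k - 2 * p ^ (k-1) := by
  classical
  have hpk : p ^ k = p * p ^ (k - 1) := by
    conv_lhs => rw [show k = 1 + (k-1) by omega, pow_add, pow_one]
  split_ifs with hpt
  · -- p ∣ t
    have key : ∀ x : ℕ, ((Int.gcd (x : ℤ) ((p^k : ℕ):ℤ) = 1 ∧ Int.gcd ((x : ℤ) + t) ((p^k : ℕ):ℤ) = 1) ↔ ¬ (x % p = 0)) := by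
      intro x
      rw [gcd_pp_left hp k hk, gcd_pp_right hp k hk]
      have hd2 : (p:ℤ) ∣ (x:ℤ) + t ↔ p ∣ x := by
        constructor
        · intro hd
          have h3 : (p:ℤ) ∣ (x:ℤ) := (Int.dvd_add_right hpt).1 (by rwa [add_comm] at hd)
          exact_mod_cast Int.natCast_dvd_natCast.1 (by exact_mod_cast h3)
        · intro hd; exact dvd_add (by exact_mod_cast Int.natCast_dvd_natCast.2 hd) hpt
      rw [hd2, Nat.dvd_iff_mod_eq_zero]
      tauto
    have hGeq : G t (p ^ k) = ((range (p^k)).filter (fun x : ℕ => ¬ (x % p = 0))).card := by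
      unfold G; congr 1
      apply Finset.filter_congr
      intro x _
      exact key x
    rw [hGeq, Finset.filter_not, Finset.card_sdiff_of_subset (Finset.filter_subset _ _), Finset.card_range]
    rw [hpk, count_mod p (p^(k-1)) 0 hp.pos, if_pos hp.pos]
  · -- ¬ p ∣ t
    set τ : ℕ := ((-t) % (p:ℤ)).toNat with hτ
    have hppos : (0:ℤ) < (p:ℤ) := by exact_mod_cast hp.pos
    have hτeq : (τ : ℤ) = (-t) % (p:ℤ) := Int.toNat_of_nonneg (Int.emod_nonneg _ (by positivity))
    have hτlt : τ < p := by
      have := Int.emod_lt_of_pos (-t) hppos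
      omega
    have hτ0 : τ ≠ 0 := by
      intro h0
      apply hpt
      have hd : (p:ℤ) ∣ (-t) := Int.dvd_of_emod_eq_zero (by rw [← hτeq, h0]; rfl)
      exact (dvd_neg).1 hd
    have key : ∀ x : ℕ, ((Int.gcd (x : ℤ) ((p^k : ℕ):ℤ) = 1 ∧ Int.gcd ((x : ℤ) + t) ((p^k : ℕ):ℤ) = 1) ↔ ¬ (x % p = 0 ∨ x % p = τ)) := by
      intro x
      rw [gcd_pp_left hp k hk, gcd_pp_right hp k hk]
      have hdvd : (p:ℤ) ∣ (x:ℤ) + t ↔ x % p = τ := by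
        rw [show ((x:ℤ) + t) = (x:ℤ) - (-t) by ring, ← Int.modEq_iff_dvd]
        unfold Int.ModEq
        constructor
        · intro h
          have h5 : ((x % p : ℕ) : ℤ) = (τ : ℤ) := by
            rw [hτeq, h, Int.natCast_mod]
          exact_mod_cast h5
        · intro h
          rw [← hτeq, ← h, Int.natCast_mod]
      rw [hdvd, Nat.dvd_iff_mod_eq_zero]
      tauto
    have hGeq : G t (p ^ k) = ((range (p^k)).filter (fun x : ℕ => ¬ (x % p = 0 ∨ x % p = τ))).card := by
      unfold G; congr 1
      apply Finset.filter_congr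
      intro x _
      exact key x
    rw [hGeq, Finset.filter_not, Finset.card_sdiff_of_subset (Finset.filter_subset _ _), Finset.card_range]
    have hsplit : ((range (p^k)).filter (fun x : ℕ => (x % p = 0 ∨ x % p = τ))) =
        ((range (p^k)).filter (fun x : ℕ => x % p = 0)) ∪ ((range (p^k)).filter (fun x : ℕ => x % p = τ)) :=
      Finset.filter_or _ _ _
    rw [hsplit, Finset.card_union_of_disjoint, hpk, count_mod p (p^(k-1)) 0 hp.pos,
      count_mod p (p^(k-1)) τ hp.pos, if_pos hp.pos, if_pos hτlt]
    · omega
    · rw [Finset.disjoint_filter]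
      intro x _ h1 h2
      omega

end VL2

namespace VL2
open VL Finset

lemma gcd_mul_iff (a b : ℕ) (z : ℤ) :
    Int.gcd z ((a * b : ℕ) : ℤ) = 1 ↔ Int.gcd z (a:ℤ) = 1 ∧ Int.gcd z (b:ℤ) = 1 := by
  have h1 : Int.gcd z ((a*b : ℕ):ℤ) = Nat.gcd z.natAbs (a*b) := rfl
  have h2 : Int.gcd z (a:ℤ) = Nat.gcd z.natAbs a := rfl
  have h3 : Int.gcd z (b:ℤ) = Nat.gcd z.natAbs b := rfl
  rw [h1, h2, h3]
  exact Nat.coprime_mul_iff_right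

lemma G_mult (t : ℤ) {a b : ℕ} (ha : 0 < a) (hb : 0 < b) (hab : a.Coprime b) :
    G t (a * b) = G t a * G t b := by
  classical
  unfold G
  rw [← Finset.card_product]
  have hcardsets : ((range a).filter (fun x : ℕ => Int.gcd (x : ℤ) a = 1 ∧ Int.gcd ((x : ℤ) + t) a = 1)) ×ˢ
      ((range b).filter (fun x : ℕ => Int.gcd (x : ℤ) b = 1 ∧ Int.gcd ((x : ℤ) + t) b = 1)) =
      ((range a).filter _) ×ˢ ((range b).filter _) := rfl
  apply Finset.card_bij' (fun x _ => ((x % a : ℕ), (x % b : ℕ)))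
    (fun rs _ => (Nat.chineseRemainder hab rs.1 rs.2).val % (a * b))
  · -- forward maps into
    intro x hx
    simp only [mem_filter, mem_range, mem_product] at hx ⊢
    obtain ⟨hxr, hx1, hx2⟩ := hx
    have hsplit1 := (gcd_mul_iff a b (x:ℤ)).1 hx1
    have hsplit2 := (gcd_mul_iff a b ((x:ℤ) + t)).1 hx2
    refine ⟨⟨Nat.mod_lt x ha, ?_⟩, ⟨Nat.mod_lt x hb, ?_⟩⟩
    · exact (cond_congr t (Nat.mod_mod_of_dvd x dvd_rfl)).2 ⟨hsplit1.1, hsplit2.1⟩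
    · exact (cond_congr t (Nat.mod_mod_of_dvd x dvd_rfl)).2 ⟨hsplit1.2, hsplit2.2⟩
  · -- backward maps into
    intro rs hrs
    simp only [mem_filter, mem_range, mem_product] at hrs ⊢
    obtain ⟨⟨hr1, hr2, hr3⟩, hs1, hs2, hs3⟩ := hrs
    set k := (Nat.chineseRemainder hab rs.1 rs.2).val with hk
    have hkprop := (Nat.chineseRemainder hab rs.1 rs.2).property
    have hmodA : (k % (a*b)) % a = rs.1 % a := by
      rw [Nat.mod_mod_of_dvd _ ⟨b, rfl⟩]
      exact hkprop.1
    have hmodB : (k % (a*b)) % b = rs.2 % b := by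
      rw [Nat.mod_mod_of_dvd _ ⟨a, mul_comm a b⟩]
      exact hkprop.2
    refine ⟨Nat.mod_lt k (Nat.mul_pos ha hb), ?_, ?_⟩
    · rw [gcd_mul_iff]
      have c1 := (cond_congr t hmodA).2 ⟨hr2, hr3⟩
      have c2 := (cond_congr t hmodB).2 ⟨hs2, hs3⟩
      exact ⟨c1.1, c2.1⟩
    · rw [gcd_mul_iff]
      have c1 := (cond_congr t hmodA).2 ⟨hr2, hr3⟩
      have c2 := (cond_congr t hmodB).2 ⟨hs2, hs3⟩
      exact ⟨c1.2, c2.2⟩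
  · -- left inverse
    intro x hx
    simp only [mem_filter, mem_range] at hx
    set k := (Nat.chineseRemainder hab (x % a) (x % b)).val with hk
    have hkprop := (Nat.chineseRemainder hab (x % a) (x % b)).property
    have h1 : k ≡ x [MOD a] := hkprop.1.trans (Nat.mod_modEq x a)
    have h2 : k ≡ x [MOD b] := hkprop.2.trans (Nat.mod_modEq x b)
    have h3 : k ≡ x [MOD a * b] := (Nat.modEq_and_modEq_iff_modEq_mul hab).1 ⟨h1, h2⟩
    calc k % (a*b) = x % (a*b) := h3
      _ = x := Nat.mod_eq_of_lt hx.1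
  · -- right inverse
    intro rs hrs
    simp only [mem_filter, mem_range, mem_product] at hrs
    set k := (Nat.chineseRemainder hab rs.1 rs.2).val with hk
    have hkprop := (Nat.chineseRemainder hab rs.1 rs.2).property
    have hmodA : (k % (a*b)) % a = rs.1 := by
      rw [Nat.mod_mod_of_dvd _ ⟨b, rfl⟩]
      exact Eq.trans (hkprop.1 : k % a = rs.1 % a) (Nat.mod_eq_of_lt hrs.1.1)
    have hmodB : (k % (a*b)) % b = rs.2 := by
      rw [Nat.mod_mod_of_dvd _ ⟨a, mul_comm a b⟩]
      exact Eq.trans (hkprop.2 : k % b = rs.2 % b) (Nat.mod_eq_of_lt hrs.2.1)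
    exact Prod.ext hmodA hmodB

end VL2

namespace VL2
open Finset

lemma G_zero (t : ℤ) : G t 0 = 0 := by simp [G]

lemma G_one (t : ℤ) : G t 1 = 1 := by
  unfold G
  rw [show (Finset.range 1) = {0} from rfl]
  norm_num

/-- `G t` as an arithmetic function. -/
def Gf (t : ℤ) : ArithmeticFunction ℕ := ⟨G t, G_zero t⟩

lemma Gf_mult (t : ℤ) : (Gf t).IsMultiplicative :=
  ArithmeticFunction.IsMultiplicative.iff_ne_zero.2
    ⟨G_one t, fun hm hn hmn => G_mult t (Nat.pos_of_ne_zero hm) (Nat.pos_of_ne_zero hn) hmn⟩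

lemma G_pp_real (t : ℤ) {p : ℕ} (hp : p.Prime) (k : ℕ) (hk : 0 < k) :
    (G t (p ^ k) : ℝ) =
      (p:ℝ) ^ k * (if (p:ℤ) ∣ t then 1 - 1/(p:ℝ) else 1 - 2/(p:ℝ)) := by
  have hp0 : (p:ℝ) ≠ 0 := Nat.cast_ne_zero.2 hp.pos.ne'
  have hsplit : (p:ℝ) ^ k = (p:ℝ) ^ (k-1) * p := by
    rw [← pow_succ]
    congr 1
    omega
  have h2p : 2 ≤ p := hp.two_le
  rw [G_pp t hp k hk]
  split_ifs with hd
  · have hle : p ^ (k-1) ≤ p ^ k := Nat.pow_le_pow_right hp.pos (by omega)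
    rw [Nat.cast_sub hle]
    push_cast
    field_simp
    rw [hsplit]
    ring
  · have hle : 2 * p ^ (k-1) ≤ p ^ k := by
      calc 2 * p ^ (k-1) ≤ p * p ^ (k-1) := Nat.mul_le_mul_right _ h2p
        _ = p ^ k := by rw [mul_comm, ← pow_succ]; congr 1; omega
    rw [Nat.cast_sub hle]
    push_cast
    field_simp
    rw [hsplit]
    ring

lemma G_real (t : ℤ) {n : ℕ} (hn : 0 < n) :
    (G t n : ℝ) = (n:ℝ) * ∏ p ∈ n.primeFactors,
      (if (p:ℤ) ∣ t then 1 - 1/(p:ℝ) else 1 - 2/(p:ℝ)) := by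
  have hfact := (Gf_mult t).multiplicative_factorization (Gf t) (hn.ne')
  have hGn : G t n = ∏ p ∈ n.primeFactors, G t (p ^ (n.factorization p)) := by
    have : Gf t n = G t n := rfl
    rw [this] at hfact
    rw [hfact, Finsupp.prod, Nat.support_factorization]
    rfl
  have hN : (n:ℝ) = ∏ p ∈ n.primeFactors, (p:ℝ) ^ (n.factorization p) := by
    conv_lhs => rw [← Nat.factorization_prod_pow_eq_self hn.ne']
    rw [Finsupp.prod, Nat.support_factorization]
    push_cast
    rfl
  rw [hGn, hN, ← Finset.prod_mul_distrib]
  push_cast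
  apply Finset.prod_congr rfl
  intro p hp
  exact G_pp_real t (Nat.prime_of_mem_primeFactors hp) _
    (Nat.Prime.factorization_pos_of_dvd (Nat.prime_of_mem_primeFactors hp) hn.ne'
      (Nat.dvd_of_mem_primeFactors hp))

end VL2

namespace VL3
open Finset VL VL2

noncomputable def Ap (p : ℕ) : ℝ := 1 - (1/((p:ℝ)-1))^2
noncomputable def Cp (p : ℕ) : ℝ := (p:ℝ) * (1/((p:ℝ)-1))^2
noncomputable def Bp (t : ℤ) (p : ℕ) : ℝ := if (p:ℤ) ∣ t then Cp p else 0

lemma two_le_real {p : ℕ} (hp : 2 ≤ p) : (2:ℝ) ≤ (p:ℝ) := by exact_mod_cast hp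

lemma Ap_nonneg {p : ℕ} (hp : 2 ≤ p) : 0 ≤ Ap p := by
  have h2 := two_le_real hp
  have h1 : (1:ℝ) ≤ (p:ℝ) - 1 := by linarith
  have : (1/((p:ℝ)-1))^2 ≤ 1 := by
    rw [div_pow, one_pow]
    rw [div_le_one (by nlinarith)]
    nlinarith
  unfold Ap; linarith

lemma Cp_nonneg {p : ℕ} (hp : 2 ≤ p) : 0 ≤ Cp p := by
  have h2 := two_le_real hp
  unfold Cp; positivity

lemma Bp_nonneg {p : ℕ} (hp : 2 ≤ p) (t : ℤ) : 0 ≤ Bp t p := by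
  unfold Bp; split_ifs
  · exact Cp_nonneg hp
  · exact le_rfl

lemma f_decomp {p : ℕ} (hp : 2 ≤ p) (t : ℤ) :
    (if (p:ℤ) ∣ t then 1 - 1/(p:ℝ) else 1 - 2/(p:ℝ)) = (1 - 1/(p:ℝ))^2 * (Bp t p + Ap p) := by
  have h2 := two_le_real hp
  have h0 : (p:ℝ) ≠ 0 := by linarith
  have h1 : (p:ℝ) - 1 ≠ 0 := by linarith
  unfold Bp Ap Cp
  split_ifs with hd
  · field_simp
    ring
  · field_simp
    ring

lemma prod_Bp (t : ℤ) (A : Finset ℕ) (hA : ∀ p ∈ A, p.Prime) :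
    ∏ p ∈ A, Bp t p = if ((∏ p ∈ A, p : ℕ) : ℤ) ∣ t then ∏ p ∈ A, Cp p else 0 := by
  split_ifs with hd
  · apply prod_congr rfl; intro p hp
    unfold Bp
    rw [if_pos (dvd_trans (Int.natCast_dvd_natCast.2 (Finset.dvd_prod_of_mem _ hp)) hd)]
  · obtain ⟨p, hpA, hpt⟩ : ∃ p ∈ A, ¬ (p:ℤ) ∣ t := by
      by_contra hall
      push_neg at hall
      apply hd
      rw [Int.natCast_dvd]
      apply Finset.prod_primes_dvd
      · intro p hp; exact (hA p hp).prime
      · intro p hp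
        rw [← Int.natCast_dvd]
        exact hall p hp
    exact Finset.prod_eq_zero hpA (by simp [Bp, hpt])

/-- count of `x < h` in a residue class, crude bound. -/
lemma fiber_le (h d r : ℕ) (hd : 0 < d) :
    ((range h).filter (fun i => i % d = r)).card ≤ h / d + 1 := by
  have : ((range h).filter (fun i => i % d = r)).card ≤ (range (h/d + 1)).card := by
    apply Finset.card_le_card_of_injOn (fun i => i / d)
    · intro i hi
      have hi : i ∈ (range h).filter (fun i => i % d = r) := hi
      show i / d ∈ range (h/d + 1)
      simp only [mem_filter, mem_range] at hi ⊢
      have : i / d ≤ h / d := Nat.div_le_div_right hi.1.le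
      omega
    · intro i hi j hj hij
      simp only [mem_filter, mem_range, coe_filter, Set.mem_setOf_eq] at hi hj
      have h1 := Nat.div_add_mod i d
      have h2 := Nat.div_add_mod j d
      simp only at hij
      have h3 : d * (i/d) = d * (j/d) := by rw [hij]
      omega
  simpa using this

lemma NN_nat (d h : ℕ) (hd : 0 < d) :
    d * (((range h) ×ˢ (range h)).filter (fun ij : ℕ × ℕ => (d:ℤ) ∣ ((ij.2:ℤ) - ij.1))).card
      ≤ h * h + h * d := by
  have key : (((range h) ×ˢ (range h)).filter (fun ij : ℕ × ℕ => (d:ℤ) ∣ ((ij.2:ℤ) - ij.1))).card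
      ≤ h * (h / d + 1) := by
    rw [Finset.card_filter, Finset.sum_product]
    calc ∑ i ∈ range h, ∑ j ∈ range h, (if (d:ℤ) ∣ ((j:ℤ) - (i:ℤ)) then 1 else 0)
        = ∑ i ∈ range h, ((range h).filter (fun j => j % d = i % d)).card := by
          apply Finset.sum_congr rfl
          intro i _
          rw [Finset.card_filter]
          apply Finset.sum_congr rfl
          intro j _
          have hiff : ((d:ℤ) ∣ ((j:ℤ) - (i:ℤ))) ↔ (j % d = i % d) :=
            Iff.trans (Nat.modEq_iff_dvd).symm eq_comm
          simp only [hiff]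
      _ ≤ ∑ _i ∈ range h, (h / d + 1) := by
          apply Finset.sum_le_sum
          intro i _
          exact_mod_cast fiber_le h d (i % d) hd
      _ = h * (h / d + 1) := by
          rw [Finset.sum_const, card_range, smul_eq_mul]
  calc d * (((range h) ×ˢ (range h)).filter (fun ij : ℕ × ℕ => (d:ℤ) ∣ ((ij.2:ℤ) - ij.1))).card
      ≤ d * (h * (h / d + 1)) := Nat.mul_le_mul_left d key
    _ = (d * (h/d)) * h + h * d := by ring
    _ ≤ h * h + h * d := by
        have : d * (h/d) ≤ h := Nat.mul_div_le h d
        exact Nat.add_le_add_right (Nat.mul_le_mul_right _ this) _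

end VL3

namespace VL3
open Finset VL VL2

lemma Cp_Ap_sum {p : ℕ} (hp : 2 ≤ p) : Cp p + Ap p = (p:ℝ)/((p:ℝ)-1) := by
  have h2 := two_le_real hp
  have h1 : (p:ℝ) - 1 ≠ 0 := by linarith
  unfold Cp Ap
  field_simp
  ring

lemma inv_Ap_sum {p : ℕ} (hp : 2 ≤ p) : (1/((p:ℝ)-1))^2 + Ap p = 1 := by
  unfold Ap; ring

lemma key_sum (n : ℕ) (hn : 0 < n) (h : ℕ) :
    ∑ ij ∈ (range h) ×ˢ (range h), (G ((ij.2:ℤ) - (ij.1:ℤ)) n : ℝ)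
      ≤ (n:ℝ) * ((h:ℝ)^2 * (∏ p ∈ n.primeFactors, (1 - 1/(p:ℝ)))^2
          + (h:ℝ) * (∏ p ∈ n.primeFactors, (1 - 1/(p:ℝ)))) := by
  classical
  set P := n.primeFactors with hP
  have hprime : ∀ p ∈ P, p.Prime := fun p hp => Nat.prime_of_mem_primeFactors hp
  have h2le : ∀ p ∈ P, 2 ≤ p := fun p hp => (hprime p hp).two_le
  set Q : ℝ := ∏ p ∈ P, (1 - 1/(p:ℝ)) with hQ
  -- rewrite each term
  have hstep1 : ∀ t : ℤ, (G t n : ℝ) = (n:ℝ) * (Q^2 *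
      ∑ A ∈ P.powerset, (∏ p ∈ A, Bp t p) * (∏ p ∈ P \ A, Ap p)) := by
    intro t
    rw [G_real t hn]
    congr 1
    rw [← Finset.prod_add]
    have : ∏ p ∈ P, (if (p:ℤ) ∣ t then 1 - 1/(p:ℝ) else 1 - 2/(p:ℝ))
        = ∏ p ∈ P, ((1 - 1/(p:ℝ))^2 * (Bp t p + Ap p)) := by
      apply Finset.prod_congr rfl
      intro p hp
      exact f_decomp (h2le p hp) t
    rw [this, Finset.prod_mul_distrib, ← Finset.prod_pow]
  have hQR : Q * (∏ p ∈ P, (p:ℝ)/((p:ℝ)-1)) = 1 := by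
    rw [hQ, ← Finset.prod_mul_distrib]
    apply Finset.prod_eq_one
    intro p hp
    have h2 := two_le_real (h2le p hp)
    have h1 : (p:ℝ) - 1 ≠ 0 := by linarith
    have h0 : (p:ℝ) ≠ 0 := by linarith
    field_simp
  calc ∑ ij ∈ (range h) ×ˢ (range h), (G ((ij.2:ℤ) - (ij.1:ℤ)) n : ℝ)
      = ((n:ℝ) * Q^2) * ∑ ij ∈ (range h) ×ˢ (range h), ∑ A ∈ P.powerset,
          (∏ p ∈ A, Bp ((ij.2:ℤ) - (ij.1:ℤ)) p) * (∏ p ∈ P \ A, Ap p) := by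
        rw [Finset.mul_sum]
        apply Finset.sum_congr rfl
        intro ij _
        rw [hstep1]
        ring
    _ = ((n:ℝ) * Q^2) * ∑ A ∈ P.powerset,
          (∏ p ∈ P \ A, Ap p) * ∑ ij ∈ (range h) ×ˢ (range h), (∏ p ∈ A, Bp ((ij.2:ℤ) - (ij.1:ℤ)) p) := by
        rw [Finset.sum_comm]
        congr 1
        apply Finset.sum_congr rfl
        intro A _
        rw [Finset.mul_sum]
        apply Finset.sum_congr rfl
        intro ij _
        ring
    _ ≤ ((n:ℝ) * Q^2) * ∑ A ∈ P.powerset,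
          (∏ p ∈ P \ A, Ap p) * ((h:ℝ)^2 * (∏ p ∈ A, (1/((p:ℝ)-1))^2) + (h:ℝ) * (∏ p ∈ A, Cp p)) := by
        apply mul_le_mul_of_nonneg_left _ (by positivity)
        apply Finset.sum_le_sum
        intro A hA
        have hAsub : A ⊆ P := Finset.mem_powerset.1 hA
        have hApr : ∀ p ∈ A, p.Prime := fun p hp => hprime p (hAsub hp)
        have hprodA_nonneg : (0:ℝ) ≤ ∏ p ∈ P \ A, Ap p :=
          Finset.prod_nonneg (fun p hp => Ap_nonneg (h2le p (Finset.mem_sdiff.1 hp).1))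
        apply mul_le_mul_of_nonneg_left _ hprodA_nonneg
        -- core bound for fixed A
        set D : ℕ := ∏ p ∈ A, p with hD
        have hDpos : 0 < D := Finset.prod_pos (fun p hp => (hApr p hp).pos)
        set CC : ℝ := ∏ p ∈ A, Cp p with hCC
        have hCCnn : 0 ≤ CC := Finset.prod_nonneg (fun p hp => Cp_nonneg (h2le p (hAsub hp)))
        set EE : ℝ := ∏ p ∈ A, (1/((p:ℝ)-1))^2 with hEE
        have hDE : (D:ℝ) * EE = CC := by
          rw [hD, hEE, hCC, Nat.cast_prod, ← Finset.prod_mul_distrib]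
          exact Finset.prod_congr rfl (fun p _ => rfl)
        have hBrw : ∑ ij ∈ (range h) ×ˢ (range h), (∏ p ∈ A, Bp ((ij.2:ℤ) - (ij.1:ℤ)) p)
            = CC * ∑ ij ∈ (range h) ×ˢ (range h),
                (if (D:ℤ) ∣ ((ij.2:ℤ) - (ij.1:ℤ)) then (1:ℝ) else 0) := by
          rw [Finset.mul_sum]
          apply Finset.sum_congr rfl
          intro ij _
          rw [prod_Bp _ _ hApr]
          split_ifs <;> ring
        rw [hBrw]
        have hNN : ∑ ij ∈ (range h) ×ˢ (range h),
            (if (D:ℤ) ∣ ((ij.2:ℤ) - (ij.1:ℤ)) then (1:ℝ) else 0)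
            ≤ (h:ℝ)^2 / (D:ℝ) + (h:ℝ) := by
          rw [Finset.sum_boole]
          have hnat := NN_nat D h hDpos
          have hDR : (0:ℝ) < (D:ℝ) := by exact_mod_cast hDpos
          rw [div_add' _ _ _ hDR.ne', le_div_iff₀ hDR]
          calc ((((range h) ×ˢ (range h)).filter
                (fun ij : ℕ × ℕ => (D:ℤ) ∣ ((ij.2:ℤ) - (ij.1:ℤ)))).card : ℝ) * (D:ℝ)
              = ((D * (((range h) ×ˢ (range h)).filter
                  (fun ij : ℕ × ℕ => (D:ℤ) ∣ ((ij.2:ℤ) - (ij.1:ℤ)))).card : ℕ) : ℝ) := by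
                push_cast
                ring
            _ ≤ ((h * h + h * D : ℕ) : ℝ) := by exact_mod_cast hnat
            _ = (h:ℝ)^2 + (h:ℝ) * (D:ℝ) := by push_cast; ring
        calc CC * ∑ ij ∈ (range h) ×ˢ (range h),
              (if (D:ℤ) ∣ ((ij.2:ℤ) - (ij.1:ℤ)) then (1:ℝ) else 0)
            ≤ CC * ((h:ℝ)^2 / (D:ℝ) + (h:ℝ)) := mul_le_mul_of_nonneg_left hNN hCCnn
          _ = (h:ℝ)^2 * EE + (h:ℝ) * CC := by
              have hDR : ((D:ℝ)) ≠ 0 := by positivity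
              rw [← hDE]
              field_simp
    _ = ((n:ℝ) * Q^2) * ((h:ℝ)^2 * ∏ p ∈ P, ((1/((p:ℝ)-1))^2 + Ap p)
          + (h:ℝ) * ∏ p ∈ P, (Cp p + Ap p)) := by
        congr 1
        rw [Finset.prod_add, Finset.prod_add, Finset.mul_sum, Finset.mul_sum, ← Finset.sum_add_distrib]
        apply Finset.sum_congr rfl
        intro A _
        ring
    _ = ((n:ℝ) * Q^2) * ((h:ℝ)^2 + (h:ℝ) * ∏ p ∈ P, (p:ℝ)/((p:ℝ)-1)) := by
        congr 2
        · rw [Finset.prod_congr rfl (fun p hp => inv_Ap_sum (h2le p hp)), Finset.prod_const_one]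
          ring
        · congr 1
          exact Finset.prod_congr rfl (fun p hp => Cp_Ap_sum (h2le p hp))
    _ = (n:ℝ) * ((h:ℝ)^2 * Q^2 + (h:ℝ) * (Q * (Q * ∏ p ∈ P, (p:ℝ)/((p:ℝ)-1)))) := by ring
    _ = (n:ℝ) * ((h:ℝ)^2 * Q^2 + (h:ℝ) * Q) := by rw [hQR, mul_one]

end VL3

namespace VL4
open Finset VL VL2 VL3

noncomputable def chi (n : ℕ) (r : ℤ) : ℝ := if Int.gcd r n = 1 then 1 else 0

lemma chi_nonneg (n : ℕ) (r : ℤ) : 0 ≤ chi n r := by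
  unfold chi; split_ifs <;> norm_num

lemma chi_periodic (n : ℕ) (r : ℤ) : chi n (r + n) = chi n r := by
  unfold chi
  congr 1
  rw [eq_iff_iff]
  refine gcd_one_congr (n:ℤ) ?_
  conv_lhs => rw [show r + (n:ℤ) = r + (n:ℤ) * 1 by ring]
  rw [Int.add_mul_emod_self_left]

lemma chi_sq (n : ℕ) (r : ℤ) : chi n r * chi n r = chi n r := by
  unfold chi; split_ifs <;> norm_num

/-- F as a sum of indicators. -/
lemma F_eq_sum (n : ℕ) (m : ℤ) (h : ℕ) :
    (F n m h : ℝ) = ∑ i ∈ range h, chi n (m + i) := by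
  rw [F, Finset.card_filter]
  rw [Nat.cast_sum]
  apply Finset.sum_nbij' (i := fun r => (r - m).toNat) (j := fun i : ℕ => m + (i:ℤ))
  · intro r hr
    simp only [mem_Ico] at hr
    simp only [mem_range]
    omega
  · intro i hi
    simp only [mem_range] at hi
    simp only [mem_Ico]
    omega
  · intro r hr
    simp only [mem_Ico] at hr
    omega
  · intro i _
    omega
  · intro r hr
    simp only [mem_Ico] at hr
    have hr2 : m + (((r - m).toNat : ℕ) : ℤ) = r := by omega
    rw [hr2]
    unfold chi
    split_ifs <;> norm_num

/-- single shift of a periodic sum -/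
lemma shift_one {n : ℕ} (hn : 0 < n) (f : ℤ → ℝ) (hf : ∀ x, f (x + n) = f x) (a : ℤ) :
    ∑ x ∈ Ico a (a + n), f x = ∑ x ∈ Ico (a+1) (a + 1 + n), f x := by
  have e1 : Ico a (a + (n:ℤ)) = insert a (Ico (a+1) (a + n)) := by
    ext x
    simp only [mem_Ico, mem_insert]
    omega
  have e2 : Ico (a+1) (a + 1 + (n:ℤ)) = insert (a + n) (Ico (a+1) (a + n)) := by
    ext x
    simp only [mem_Ico, mem_insert]
    omega
  have h1 : a ∉ Ico (a+1) (a + (n:ℤ)) := by simp [mem_Ico]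
  have h2 : a + (n:ℤ) ∉ Ico (a+1) (a + (n:ℤ)) := by simp [mem_Ico]
  rw [e1, e2, Finset.sum_insert h1, Finset.sum_insert h2, hf a]

lemma shift_nat {n : ℕ} (hn : 0 < n) (f : ℤ → ℝ) (hf : ∀ x, f (x + n) = f x) (k : ℕ) :
    ∑ x ∈ Ico (0:ℤ) n, f x = ∑ x ∈ Ico (k:ℤ) (k + n), f x := by
  induction k with
  | zero => norm_num
  | succ k ih =>
      rw [ih, shift_one hn f hf (k:ℤ)]
      have hc : ((k+1:ℕ):ℤ) = (k:ℤ)+1 := by push_cast; ring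
      rw [hc]

/-- bridge: the base-period sum equals `G`. -/
lemma sum_chi_eq_G (n : ℕ) (t : ℤ) :
    ∑ x ∈ Ico (0:ℤ) n, chi n x * chi n (x + t) = (G t n : ℝ) := by
  rw [G, Finset.card_filter, Nat.cast_sum]
  apply Finset.sum_nbij' (i := fun x : ℤ => x.toNat) (j := fun i : ℕ => (i:ℤ))
  · intro r hr
    simp only [mem_Ico] at hr
    simp only [mem_range]
    omega
  · intro i hi
    simp only [mem_range] at hi
    simp only [mem_Ico]
    omega
  · intro r hr
    simp only [mem_Ico] at hr
    omega
  · intro i _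
    omega
  · intro r hr
    simp only [mem_Ico] at hr
    have hr' : ((r.toNat : ℕ) : ℤ) = r := by omega
    rw [hr']
    by_cases c1 : Int.gcd r (n:ℤ) = 1 <;> by_cases c2 : Int.gcd (r + t) (n:ℤ) = 1 <;>
      simp [chi, c1, c2]

lemma G_zero_eq_totient (n : ℕ) : G 0 n = Nat.totient n := by
  rw [G, Nat.totient]
  congr 1
  apply Finset.filter_congr
  intro x _
  simp only [add_zero, and_self, Int.gcd_natCast_natCast]
  exact Nat.coprime_comm

end VL4

namespace VL5
open Finset VL VL2 VL3 VL4

lemma sum_Icc_shift (n : ℕ) (g : ℤ → ℝ) (c : ℤ) :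
    ∑ m ∈ Icc (1:ℤ) n, g (m + c) = ∑ x ∈ Ico (1+c) (1+c+n), g x := by
  apply Finset.sum_nbij' (i := fun m => m + c) (j := fun x => x - c)
  · intro a ha; simp only [mem_Icc] at ha; simp only [mem_Ico]; omega
  · intro a ha; simp only [mem_Ico] at ha; simp only [mem_Icc]; omega
  · intro a _; omega
  · intro a _; omega
  · intro a _; rfl

lemma base_chi (n : ℕ) : ∑ x ∈ Ico (0:ℤ) n, chi n x = (Nat.totient n : ℝ) := by
  have h1 := sum_chi_eq_G n 0
  rw [G_zero_eq_totient] at h1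
  rw [← h1]
  apply Finset.sum_congr rfl
  intro x _
  rw [add_zero, chi_sq]

lemma inner_chi (n : ℕ) (hn : 0 < n) (i : ℕ) :
    ∑ m ∈ Icc (1:ℤ) n, chi n (m + i) = (Nat.totient n : ℝ) := by
  rw [sum_Icc_shift n (chi n) i, ← base_chi n]
  have := shift_nat hn (chi n) (chi_periodic n) (1 + i)
  rw [this]
  congr 2 <;> push_cast <;> ring

lemma inner_chi2 (n : ℕ) (hn : 0 < n) (i j : ℕ) :
    ∑ m ∈ Icc (1:ℤ) n, chi n (m + i) * chi n (m + j) = (G ((j:ℤ) - (i:ℤ)) n : ℝ) := by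
  set d : ℤ := (j:ℤ) - (i:ℤ) with hd
  have hfun : ∀ m : ℤ, chi n (m + i) * chi n (m + j) = chi n (m + i) * chi n ((m + i) + d) := by
    intro m
    congr 2
    rw [hd]; ring
  rw [Finset.sum_congr rfl (fun m _ => hfun m)]
  rw [sum_Icc_shift n (fun x => chi n x * chi n (x + d)) i]
  rw [← sum_chi_eq_G n d]
  have hper : ∀ x : ℤ, chi n (x + n) * chi n ((x + n) + d) = chi n x * chi n (x + d) := by
    intro x
    rw [chi_periodic]
    congr 1
    rw [show (x + (n:ℤ)) + d = (x + d) + n by ring, chi_periodic]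
  have := shift_nat hn (fun x => chi n x * chi n (x + d)) hper (1 + i)
  rw [this]
  congr 2 <;> push_cast <;> ring

theorem variance_le_mean' (n : ℕ) (hn : 2 ≤ n) (h : ℕ) :
    Hvar n h ≤ (h : ℝ) * (Nat.totient n) / n := by
  have hn0 : 0 < n := by omega
  have hnR : (0:ℝ) < n := by exact_mod_cast hn0
  set P := n.primeFactors with hP
  set Q : ℝ := ∏ p ∈ P, (1 - 1/(p:ℝ)) with hQ
  have hphi : (Nat.totient n : ℝ) = n * Q := by
    rw [← G_zero_eq_totient n, G_real 0 hn0]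
    simp only [dvd_zero, if_true]
    rfl
  have hμ : (h:ℝ) * (Nat.totient n) / n = h * Q := by
    rw [hphi]
    field_simp
  have hcard : ((Icc (1:ℤ) (n:ℤ)).card : ℝ) = (n:ℝ) := by
    rw [Int.card_Icc]
    have : ((n:ℤ) + 1 - 1).toNat = n := by omega
    rw [this]
  -- mean
  have hFsum : ∑ m ∈ Icc (1:ℤ) n, (F n m h : ℝ) = (h:ℝ) * (Nat.totient n) := by
    calc ∑ m ∈ Icc (1:ℤ) n, (F n m h : ℝ)
        = ∑ m ∈ Icc (1:ℤ) n, ∑ i ∈ range h, chi n (m + i) :=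
          Finset.sum_congr rfl (fun m _ => F_eq_sum n m h)
      _ = ∑ i ∈ range h, ∑ m ∈ Icc (1:ℤ) n, chi n (m + i) := Finset.sum_comm
      _ = ∑ _i ∈ range h, (Nat.totient n : ℝ) :=
          Finset.sum_congr rfl (fun i _ => inner_chi n hn0 i)
      _ = (h:ℝ) * (Nat.totient n) := by rw [Finset.sum_const, card_range, nsmul_eq_mul]
  -- second moment
  have hF2sum : ∑ m ∈ Icc (1:ℤ) n, (F n m h : ℝ)^2
      = ∑ ij ∈ (range h) ×ˢ (range h), (G ((ij.2:ℤ) - (ij.1:ℤ)) n : ℝ) := by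
    rw [Finset.sum_product]
    calc ∑ m ∈ Icc (1:ℤ) n, (F n m h : ℝ)^2
        = ∑ m ∈ Icc (1:ℤ) n, ∑ i ∈ range h, ∑ j ∈ range h, chi n (m + i) * chi n (m + j) := by
          apply Finset.sum_congr rfl
          intro m _
          rw [F_eq_sum n m h, sq, Finset.sum_mul_sum]
      _ = ∑ i ∈ range h, ∑ m ∈ Icc (1:ℤ) n, ∑ j ∈ range h, chi n (m + i) * chi n (m + j) :=
          Finset.sum_comm
      _ = ∑ i ∈ range h, ∑ j ∈ range h, ∑ m ∈ Icc (1:ℤ) n, chi n (m + i) * chi n (m + j) :=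
          Finset.sum_congr rfl (fun i _ => Finset.sum_comm)
      _ = ∑ i ∈ range h, ∑ j ∈ range h, (G ((j:ℤ) - (i:ℤ)) n : ℝ) :=
          Finset.sum_congr rfl (fun i _ => Finset.sum_congr rfl (fun j _ => inner_chi2 n hn0 i j))
  have hkey := key_sum n hn0 h
  rw [← hF2sum] at hkey
  -- expand the variance
  have hexp : ∑ m ∈ Icc (1:ℤ) n, ((F n m h : ℝ) - (h:ℝ) * (Nat.totient n) / n)^2
      = ∑ m ∈ Icc (1:ℤ) n, (F n m h : ℝ)^2 - 2*((h:ℝ)*Q)*((h:ℝ) * (Nat.totient n))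
        + (n:ℝ) * ((h:ℝ)*Q)^2 := by
    calc ∑ m ∈ Icc (1:ℤ) n, ((F n m h : ℝ) - (h:ℝ) * (Nat.totient n) / n)^2
        = ∑ m ∈ Icc (1:ℤ) n, ((F n m h : ℝ)^2 - 2*((h:ℝ)*Q)*(F n m h : ℝ) + ((h:ℝ)*Q)^2) := by
          apply Finset.sum_congr rfl
          intro m _
          rw [hμ]
          ring
      _ = ∑ m ∈ Icc (1:ℤ) n, (F n m h : ℝ)^2 - 2*((h:ℝ)*Q)*(∑ m ∈ Icc (1:ℤ) n, (F n m h : ℝ))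
          + ((Icc (1:ℤ) (n:ℤ)).card : ℝ) * ((h:ℝ)*Q)^2 := by
          rw [Finset.sum_add_distrib, Finset.sum_sub_distrib, ← Finset.mul_sum,
            Finset.sum_const, nsmul_eq_mul]
      _ = _ := by rw [hFsum, hcard]
  rw [Hvar, hexp, hμ]
  have hQhphi : (h:ℝ) * (Nat.totient n) = (h:ℝ) * ((n:ℝ) * Q) := by rw [hphi]
  rw [hQhphi]
  have hfinal : ∑ m ∈ Icc (1:ℤ) n, (F n m h : ℝ)^2 - 2*((h:ℝ)*Q)*((h:ℝ)*((n:ℝ)*Q))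
      + (n:ℝ)*((h:ℝ)*Q)^2 ≤ (n:ℝ) * ((h:ℝ)*Q) := by
    have := hkey
    nlinarith [this]
  calc (1/(n:ℝ)) * (∑ m ∈ Icc (1:ℤ) n, (F n m h : ℝ)^2 - 2*((h:ℝ)*Q)*((h:ℝ)*((n:ℝ)*Q))
      + (n:ℝ)*((h:ℝ)*Q)^2)
      ≤ (1/(n:ℝ)) * ((n:ℝ) * ((h:ℝ)*Q)) := by
        apply mul_le_mul_of_nonneg_left hfinal
        positivity
    _ = (h:ℝ) * Q := by field_simp

end VL5

/-- For every even `n ≥ 2` and every `h ≥ 0`, the variance of the coprime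
count is bounded by its mean: `H(n,h) ≤ h φ(n)/n`. -/
theorem variance_le_mean (n : ℕ) (hn : 2 ≤ n) (heven : 2 ∣ n) (h : ℕ) :
    Hvar n h ≤ (h : ℝ) * (Nat.totient n) / n :=
  VL5.variance_le_mean' n hn h
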